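/- Let U be a unitary operator on ℂ²_i ⊗ ℂ²_j ⊗ ℂ^m and suppose the Heisenberg-evolved projector factorizes at site i, i.e., U (|0_j⟩⟨0_j| ⊗ I) U* = I₂ ⊗ Q for some operator Q on ℂ²_j ⊗ ℂ^m (the outside-the-causal-cone condition). Then: (1) Q is an orthogonal projection of rank m; (2) the truncated propagator A := (⟨0_i| ⊗ I) U (|0_j⟩ ⊗ I) satisfies A A* = Q; and (3) the singular values of A lie in {0,1}, with exactly m singular values equal to 1 and m equal to 0 — the same bimodal spectrum as for U = Id. -/

import Mathlib

open Matrix Module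

set_option maxHeartbeats 1000000 in
/-- **Outside the causal cone.** If the Heisenberg-evolved projector factorizes
at site `i`, i.e. `U (|0_j⟩⟨0_j| ⊗ I) U* = I₂ ⊗ Q`, then `Q` is an orthogonal
projection of rank `m`, the truncated propagator satisfies `A A* = Q`, and the
singular values of `A` lie in `{0,1}` with exactly `m` ones and `m` zeros — the
same bimodal spectrum as for `U = Id`. -/
theorem outside_causal_cone_bimodal
    (m : ℕ) (hm : 1 ≤ m)
    (U : Matrix (Fin 2 × Fin 2 × Fin m) (Fin 2 × Fin 2 × Fin m) ℂ)
    (hU : U ∈ Matrix.unitaryGroup (Fin 2 × Fin 2 × Fin m) ℂ)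
    -- the projector `P_j = |0_j⟩⟨0_j| ⊗ I` on the full space
    (Pj : Matrix (Fin 2 × Fin 2 × Fin m) (Fin 2 × Fin 2 × Fin m) ℂ)
    (hPj : ∀ p q : Fin 2 × Fin 2 × Fin m,
      Pj p q = if p.1 = q.1 ∧ p.2.1 = 0 ∧ q.2.1 = 0 ∧ p.2.2 = q.2.2 then 1 else 0)
    -- the factorization hypothesis `U P_j U* = I₂ ⊗ Q` (outside the causal cone)
    (Q : Matrix (Fin 2 × Fin m) (Fin 2 × Fin m) ℂ)
    (hQ : ∀ (a : Fin 2) (b : Fin 2) (x : Fin m) (a' : Fin 2) (b' : Fin 2) (x' : Fin m),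
      (U * Pj * Uᴴ) (a, b, x) (a', b', x')
        = if a = a' then Q (b, x) (b', x') else 0)
    -- the truncated propagator
    (A : Matrix (Fin 2 × Fin m) (Fin 2 × Fin m) ℂ)
    (hA : ∀ (b : Fin 2) (y : Fin m) (a : Fin 2) (x : Fin m),
      A (b, y) (a, x) = U ((0 : Fin 2), b, y) (a, (0 : Fin 2), x)) :
    (Qᴴ = Q ∧ Q * Q = Q ∧ Q.rank = m) ∧
    A * Aᴴ = Q ∧
    ((∀ μ : ℂ, Module.End.HasEigenvalue (Matrix.mulVecLin (A * Aᴴ)) μ →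
        μ = 0 ∨ μ = 1) ∧
      Module.finrank ℂ (Module.End.eigenspace (Matrix.mulVecLin (A * Aᴴ)) 1) = m ∧
      Module.finrank ℂ (Module.End.eigenspace (Matrix.mulVecLin (A * Aᴴ)) 0) = m) := by
  classical
  -- the isometry `J` embedding `ℂ²_j ⊗ ℂ^m` at `b = 0` of the middle qubit
  set J : Matrix (Fin 2 × Fin 2 × Fin m) (Fin 2 × Fin m) ℂ :=
    fun r cz => if r = (cz.1, 0, cz.2) then 1 else 0 with hJdef
  have hU1 : Uᴴ * U = 1 := by
    simpa [Matrix.star_eq_conjTranspose] using hU.1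
  have hUJ : ∀ (p : Fin 2 × Fin 2 × Fin m) (cz : Fin 2 × Fin m),
      (U * J) p cz = U p (cz.1, 0, cz.2) := by
    intro p cz
    rw [Matrix.mul_apply]
    simp [hJdef, mul_ite, Finset.sum_ite_eq']
  have hJJ : Jᴴ * J = (1 : Matrix (Fin 2 × Fin m) (Fin 2 × Fin m) ℂ) := by
    ext cz cz'
    rw [Matrix.mul_apply, Matrix.one_apply]
    simp only [Matrix.conjTranspose_apply]
    simp only [hJdef, apply_ite (star : ℂ → ℂ),
      star_one, star_zero, ite_mul, one_mul, zero_mul]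
    rw [Finset.sum_ite_eq']
    by_cases h : cz = cz'
    · simp [h]
    · have hne : ((cz.1, (0 : Fin 2), cz.2) : Fin 2 × Fin 2 × Fin m) ≠ (cz'.1, 0, cz'.2) := by
        intro hh
        rw [Prod.mk.injEq, Prod.mk.injEq] at hh
        exact h (Prod.ext hh.1 hh.2.2)
      simp [h, hne]
  have hPjJ : Pj = J * Jᴴ := by
    ext p q
    obtain ⟨a, b, x⟩ := p
    obtain ⟨a', b', x'⟩ := q
    rw [hPj, Matrix.mul_apply]
    by_cases hb : b = 0
    · subst hb
      rw [Finset.sum_eq_single ((a, x) : Fin 2 × Fin m)]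
      · simp only [Matrix.conjTranspose_apply]
        simp only [hJdef]
        by_cases h : a' = a ∧ b' = 0 ∧ x' = x
        · obtain ⟨h1, h2, h3⟩ := h
          subst h1; subst h2; subst h3
          simp
        · have hne : ((a', b', x') : Fin 2 × Fin 2 × Fin m) ≠ (a, 0, x) := by
            intro hh
            rw [Prod.mk.injEq, Prod.mk.injEq] at hh
            exact h ⟨hh.1, hh.2.1, hh.2.2⟩
          have hcond : ¬(a = a' ∧ (0 : Fin 2) = 0 ∧ b' = 0 ∧ x = x') := by
            rintro ⟨h1, -, h3, h4⟩
            exact h ⟨h1.symm, h3, h4.symm⟩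
          simp only [hne, if_false, star_zero, mul_zero, apply_ite (star : ℂ → ℂ),
            star_one, mul_ite, mul_one]
          rw [if_neg (by rintro ⟨h1, -, h3, h4⟩; exact h ⟨h1.symm, h3, h4.symm⟩ :
            ¬(a = a' ∧ True ∧ b' = 0 ∧ x = x'))]
      · rintro ⟨c, z⟩ - hne
        have hz : ((a, (0 : Fin 2), x) : Fin 2 × Fin 2 × Fin m) ≠ (c, 0, z) := by
          intro hh
          rw [Prod.mk.injEq, Prod.mk.injEq] at hh
          exact hne (Prod.ext hh.1.symm hh.2.2.symm)
        simp [hJdef, hz]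
      · intro h
        exact absurd (Finset.mem_univ _) h
    · have hz : ∀ cz : Fin 2 × Fin m, J (a, b, x) cz = 0 := by
        intro cz
        simp only [hJdef]
        rw [if_neg]
        intro hh
        rw [Prod.mk.injEq, Prod.mk.injEq] at hh
        exact hb hh.2.1
      have hcond : ¬(a = a' ∧ b = 0 ∧ b' = 0 ∧ x = x') := fun h => hb h.2.1
      simp [hz, hcond]
  have hM : U * Pj * Uᴴ = (U * J) * (U * J)ᴴ := by
    rw [hPjJ, Matrix.conjTranspose_mul]
    simp only [Matrix.mul_assoc]
  -- A Aᴴ = Q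
  have hAA : A * Aᴴ = Q := by
    ext p q
    obtain ⟨b, y⟩ := p
    obtain ⟨b', y'⟩ := q
    have h1 : (A * Aᴴ) (b, y) (b', y')
        = ((U * J) * (U * J)ᴴ) (0, b, y) (0, b', y') := by
      rw [Matrix.mul_apply, Matrix.mul_apply]
      refine Finset.sum_congr rfl ?_
      rintro ⟨a, x⟩ -
      rw [Matrix.conjTranspose_apply, Matrix.conjTranspose_apply, hA, hA, hUJ, hUJ]
    rw [h1, ← hM, hQ]
    simp
  -- Q is Hermitian
  have hQH : Qᴴ = Q := by
    rw [← hAA, Matrix.conjTranspose_mul, Matrix.conjTranspose_conjTranspose]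
  -- (U J) is an isometry, hence U Pj Uᴴ is idempotent
  have hMM : (U * J)ᴴ * (U * J) = 1 := by
    rw [Matrix.conjTranspose_mul, Matrix.mul_assoc, ← Matrix.mul_assoc Uᴴ U J, hU1,
      Matrix.one_mul, hJJ]
  have hRR : (U * Pj * Uᴴ) * (U * Pj * Uᴴ) = U * Pj * Uᴴ := by
    rw [hM]
    calc (U * J) * (U * J)ᴴ * ((U * J) * (U * J)ᴴ)
        = (U * J) * (((U * J)ᴴ * (U * J)) * (U * J)ᴴ) := by simp only [Matrix.mul_assoc]
      _ = (U * J) * (U * J)ᴴ := by rw [hMM, Matrix.one_mul]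
  -- Q is idempotent
  have hQQ : Q * Q = Q := by
    ext p q
    obtain ⟨b, x⟩ := p
    obtain ⟨b', x'⟩ := q
    have h2 := congrFun (congrFun hRR ((0 : Fin 2), b, x)) ((0 : Fin 2), b', x')
    rw [Matrix.mul_apply] at h2
    have hsum : ∑ r : Fin 2 × Fin 2 × Fin m,
        (U * Pj * Uᴴ) (0, b, x) r * (U * Pj * Uᴴ) r (0, b', x')
        = ∑ j : Fin 2 × Fin m, Q (b, x) j * Q j (b', x') := by
      rw [Fintype.sum_prod_type]
      have key : ∀ (a : Fin 2) (j : Fin 2 × Fin m),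
          (U * Pj * Uᴴ) (0, b, x) (a, j) * (U * Pj * Uᴴ) (a, j) (0, b', x')
            = if a = 0 then Q (b, x) j * Q j (b', x') else 0 := by
        rintro a ⟨e, z⟩
        rw [hQ, hQ]
        by_cases h : a = 0
        · simp [h]
        · simp [h, fun hh : (0 : Fin 2) = a => h hh.symm]
      simp_rw [key]
      rw [Fin.sum_univ_two]
      simp
    rw [hsum] at h2
    rw [Matrix.mul_apply, h2, hQ]
    simp
  -- traces
  have hdiagPj : ∀ p : Fin 2 × Fin 2 × Fin m,
      Pj p p = if p.2.1 = (0 : Fin 2) then (1 : ℂ) else 0 := by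
    intro p
    rw [hPj]
    simp
  have htrPj : Pj.trace = (2 * m : ℂ) := by
    have h0 : Pj.trace = ∑ p : Fin 2 × Fin 2 × Fin m, Pj p p := rfl
    rw [h0, Fintype.sum_prod_type]
    have hinner : ∀ a : Fin 2, ∑ bx : Fin 2 × Fin m, Pj (a, bx) (a, bx) = (m : ℂ) := by
      intro a
      rw [Fintype.sum_prod_type, Fin.sum_univ_two]
      have h1 : ∀ x : Fin m, Pj (a, 0, x) (a, 0, x) = 1 := fun x => by rw [hPj]; simp
      have h2 : ∀ x : Fin m, Pj (a, 1, x) (a, 1, x) = 0 := fun x => by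
        rw [hPj]; simp [show (1 : Fin 2) ≠ 0 from by decide]
      simp [h1, h2]
    simp_rw [hinner]
    rw [Fin.sum_univ_two]
    ring
  have htrR : (U * Pj * Uᴴ).trace = Pj.trace := by
    rw [Matrix.trace_mul_comm (U * Pj) Uᴴ, ← Matrix.mul_assoc, hU1, Matrix.one_mul]
  have htrR2 : (U * Pj * Uᴴ).trace = 2 * Q.trace := by
    have key : ∀ (a : Fin 2) (j : Fin 2 × Fin m),
        (U * Pj * Uᴴ) (a, j) (a, j) = Q j j := by
      rintro a ⟨e, z⟩
      rw [hQ]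
      simp
    have h0 : (U * Pj * Uᴴ).trace = ∑ p : Fin 2 × Fin 2 × Fin m,
        (U * Pj * Uᴴ) p p := rfl
    have h1 : Q.trace = ∑ j : Fin 2 × Fin m, Q j j := rfl
    rw [h0, h1, Fintype.sum_prod_type]
    simp_rw [key]
    rw [Fin.sum_univ_two]
    ring
  have htrQ : Q.trace = (m : ℂ) := by
    have h5 : (2 : ℂ) * Q.trace = 2 * m := by rw [← htrR2, htrR, htrPj]
    exact mul_left_cancel₀ (two_ne_zero) h5
  -- rank = m via the trace of the projection
  set T : (Fin 2 × Fin m → ℂ) →ₗ[ℂ] (Fin 2 × Fin m → ℂ) := Q.mulVecLin with hTdef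
  have hT : T ∘ₗ T = T := by rw [hTdef, ← Matrix.mulVecLin_mul, hQQ]
  have hproj : LinearMap.IsProj (LinearMap.range T) T :=
    ⟨fun x => LinearMap.mem_range_self _ x, by
      rintro x ⟨y, rfl⟩
      exact LinearMap.congr_fun hT y⟩
  have htrT : LinearMap.trace ℂ _ T = Q.trace := by
    rw [LinearMap.trace_eq_matrix_trace ℂ (Pi.basisFun ℂ (Fin 2 × Fin m)) T,
      LinearMap.toMatrix_eq_toMatrix']
    congr 1
    rw [hTdef, ← Matrix.toLin'_apply', LinearMap.toMatrix'_toLin']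
  have hrk : finrank ℂ (LinearMap.range T) = m := by
    have h6 : ((finrank ℂ (LinearMap.range T) : ℂ)) = (m : ℂ) := by
      rw [← hproj.trace, htrT, htrQ]
    exact_mod_cast h6
  have hrank : Q.rank = m := hrk
  refine ⟨⟨hQH, hQQ, hrank⟩, hAA, ?_, ?_, ?_⟩
  · -- eigenvalues are 0 or 1
    intro μ hμ
    rw [hAA] at hμ
    obtain ⟨v, hv⟩ := hμ.exists_hasEigenvector
    have hveq : T v = μ • v := hv.apply_eq_smul
    have h7 : (μ * μ - μ) • v = 0 := by
      have h8 : T (T v) = T v := LinearMap.congr_fun hT v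
      rw [hveq, _root_.map_smul, hveq, smul_smul] at h8
      rw [sub_smul, h8, sub_self]
    rcases smul_eq_zero.mp h7 with h | h
    · have h9 : μ * (μ - 1) = 0 := by linear_combination h
      rcases mul_eq_zero.mp h9 with h' | h'
      · exact Or.inl h'
      · exact Or.inr (by linear_combination h')
    · exact absurd h hv.right
  · -- eigenspace of 1 has dimension m
    rw [hAA]
    have he1 : Module.End.eigenspace T 1 = LinearMap.range T := by
      ext v
      rw [Module.End.mem_eigenspace_iff, one_smul]
      constructor
      · intro h; exact ⟨v, h⟩
      · rintro ⟨y, rfl⟩; exact LinearMap.congr_fun hT y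
    rw [show Matrix.mulVecLin Q = T from rfl, he1, hrk]
  · -- eigenspace of 0 has dimension m
    rw [hAA]
    have he0 : Module.End.eigenspace (Matrix.mulVecLin Q) 0 = LinearMap.ker T :=
      Module.End.eigenspace_zero T
    rw [he0]
    have h9 := LinearMap.finrank_range_add_finrank_ker T
    have h10 : finrank ℂ (Fin 2 × Fin m → ℂ) = 2 * m := by
      rw [Module.finrank_pi]
      simp [Fintype.card_prod]
    rw [h10, hrk] at h9
    omega
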